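/- Let b : ℝ → ℝ be continuous and let η < η₀ be real numbers. Define ρ(θ,ζ) = √(cos²θ·e^{−2b(ζ)} + sin²θ·e^{2b(ζ)}), and set K(θ) = ∫_η^{η₀} ρ(θ,ζ)^{−3} dζ, so that the angular derivatives of the conformal light-cone coordinates are ∂x/∂θ = −sinθ·K(θ) and ∂y/∂θ = cosθ·K(θ). Then the rescaled circumference L(η,η₀) = ∫₀^{2π} √(e^{2b(η)}·(∂x/∂θ)² + e^{−2b(η)}·(∂y/∂θ)²) dθ satisfies L(η,η₀) ≥ 4·(η₀ − η). -/

import Mathlib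

open Real Filter intervalIntegral


noncomputable def Qf (a θ : ℝ) : ℝ :=
  Real.sqrt ((Real.cos θ) ^ 2 * Real.exp (-(2 * a)) + (Real.sin θ) ^ 2 * Real.exp (2 * a))

lemma Qg_pos (a θ : ℝ) :
    0 < (Real.cos θ) ^ 2 * Real.exp (-(2 * a)) + (Real.sin θ) ^ 2 * Real.exp (2 * a) := by
  rcases eq_or_ne (Real.cos θ) 0 with h | h
  · have hs : (Real.sin θ) ^ 2 = 1 := by
      have := Real.sin_sq_add_cos_sq θ; rw [h] at this; nlinarith
    rw [h, hs]; positivity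
  · have h1 : 0 < (Real.cos θ) ^ 2 * Real.exp (-(2 * a)) := by positivity
    nlinarith [sq_nonneg (Real.sin θ), Real.exp_pos (2 * a)]

lemma Qf_pos (a θ : ℝ) : 0 < Qf a θ := Real.sqrt_pos.2 (Qg_pos a θ)

lemma Qf_sq (a θ : ℝ) :
    Qf a θ ^ 2 = (Real.cos θ) ^ 2 * Real.exp (-(2 * a)) + (Real.sin θ) ^ 2 * Real.exp (2 * a) :=
  Real.sq_sqrt (Qg_pos a θ).le

lemma Qf_cont : Continuous fun p : ℝ × ℝ => Qf p.1 p.2 := by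
  unfold Qf; fun_prop

lemma Qf_cont_theta (a : ℝ) : Continuous fun θ => Qf a θ := by
  unfold Qf; fun_prop




lemma Qf_hasDeriv (a θ : ℝ) :
    HasDerivAt (fun t => Qf a t)
      (Real.sin θ * Real.cos θ * (Real.exp (2 * a) - Real.exp (-(2 * a))) / Qf a θ) θ := by
  have hg : HasDerivAt
      (fun t => (Real.cos t) ^ 2 * Real.exp (-(2 * a)) + (Real.sin t) ^ 2 * Real.exp (2 * a))
      (2 * Real.sin θ * Real.cos θ * (Real.exp (2 * a) - Real.exp (-(2 * a)))) θ := by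
    have h1 := ((Real.hasDerivAt_cos θ).pow 2).mul_const (Real.exp (-(2 * a)))
    have h2 := ((Real.hasDerivAt_sin θ).pow 2).mul_const (Real.exp (2 * a))
    refine (h1.add h2).congr_deriv ?_
    ring
  have h := (Real.hasDerivAt_sqrt (Qg_pos a θ).ne').comp θ hg
  refine h.congr_deriv ?_
  symm
  have hq := Qf_pos a θ
  unfold Qf at *
  field_simp

lemma F_hasDeriv (a θ : ℝ) :
    HasDerivAt (fun t => -Real.cos t / (Real.exp (2 * a) * Qf a t))
      (Real.sin θ / Qf a θ ^ 3) θ := by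
  have hq := Qf_pos a θ
  have hd : HasDerivAt (fun t => Real.exp (2 * a) * Qf a t)
      (Real.exp (2 * a) * (Real.sin θ * Real.cos θ * (Real.exp (2 * a) - Real.exp (-(2 * a))) / Qf a θ)) θ :=
    (Qf_hasDeriv a θ).const_mul _
  have hn : HasDerivAt (fun t => -Real.cos t) (Real.sin θ) θ := by
    have h := (Real.hasDerivAt_cos θ).neg; simp only [neg_neg] at h; exact h
  have h := hn.div hd (by positivity)
  refine h.congr_deriv ?_
  symm
  have hsq := Qf_sq a θ
  have he : Real.exp (2 * a) > 0 := Real.exp_pos _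
  field_simp
  linear_combination (-(Real.sin θ)) * hsq - (Real.sin θ * Real.exp (2 * a)) * (Real.sin_sq_add_cos_sq θ)

lemma G_hasDeriv (a θ : ℝ) :
    HasDerivAt (fun t => Real.sin t / (Real.exp (-(2 * a)) * Qf a t))
      (Real.cos θ / Qf a θ ^ 3) θ := by
  have hq := Qf_pos a θ
  have hd : HasDerivAt (fun t => Real.exp (-(2 * a)) * Qf a t)
      (Real.exp (-(2 * a)) * (Real.sin θ * Real.cos θ * (Real.exp (2 * a) - Real.exp (-(2 * a))) / Qf a θ)) θ :=
    (Qf_hasDeriv a θ).const_mul _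
  have h := (Real.hasDerivAt_sin θ).div hd (by positivity)
  refine h.congr_deriv ?_
  symm
  have hsq := Qf_sq a θ
  field_simp
  linear_combination (-(Real.cos θ)) * hsq - (Real.cos θ * Real.exp (-(2 * a))) * (Real.sin_sq_add_cos_sq θ)



lemma sqrt_exp' (x : ℝ) : Real.sqrt (Real.exp (2 * x)) = Real.exp x := by
  rw [show Real.exp (2 * x) = Real.exp x ^ 2 by rw [← Real.exp_nat_mul]; ring_nf,
    Real.sqrt_sq (Real.exp_pos x).le]

lemma Qf_zero (a : ℝ) : Qf a 0 = Real.exp (-a) := by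
  simp [Qf]
  rw [show (-(2*a)) = 2 * (-a) by ring, sqrt_exp']

lemma Qf_pi (a : ℝ) : Qf a π = Real.exp (-a) := by
  simp [Qf]
  rw [show (-(2*a)) = 2 * (-a) by ring, sqrt_exp']

lemma Qf_two_pi (a : ℝ) : Qf a (2 * π) = Real.exp (-a) := by
  simp [Qf, Real.cos_two_pi, Real.sin_two_pi]
  rw [show (-(2*a)) = 2 * (-a) by ring, sqrt_exp']

lemma Qf_pi_div_two (a : ℝ) : Qf a (π / 2) = Real.exp a := by
  simp [Qf]
  exact sqrt_exp' a

lemma Qf_3pi_div_two (a : ℝ) : Qf a (3 * π / 2) = Real.exp a := by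
  have hc : Real.cos (3 * π / 2) = 0 := by
    rw [show (3 * π / 2) = π + π / 2 by ring, Real.cos_add]
    simp
  have hs : Real.sin (3 * π / 2) = -1 := by
    rw [show (3 * π / 2) = π + π / 2 by ring, Real.sin_add]
    simp
  simp [Qf, hc, hs]
  exact sqrt_exp' a




lemma intSin_int (a u v : ℝ) : IntervalIntegrable (fun θ => Real.sin θ / Qf a θ ^ 3) MeasureTheory.volume u v :=
  (Real.continuous_sin.div ((Qf_cont_theta a).pow 3) (fun θ => (pow_pos (Qf_pos a θ) 3).ne')).intervalIntegrable u v

lemma intCos_int (a u v : ℝ) : IntervalIntegrable (fun θ => Real.cos θ / Qf a θ ^ 3) MeasureTheory.volume u v :=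
  (Real.continuous_cos.div ((Qf_cont_theta a).pow 3) (fun θ => (pow_pos (Qf_pos a θ) 3).ne')).intervalIntegrable u v

lemma exp_key (a : ℝ) : Real.exp (2 * a) * Real.exp (-a) = Real.exp a := by
  rw [← Real.exp_add]; ring_nf

lemma exp_key' (a : ℝ) : Real.exp (-(2 * a)) * Real.exp a = Real.exp (-a) := by
  rw [← Real.exp_add]; ring_nf

lemma intSin1 (a : ℝ) : ∫ θ in (0:ℝ)..π, Real.sin θ / Qf a θ ^ 3 = 2 * Real.exp (-a) := by
  rw [integral_eq_sub_of_hasDerivAt (fun θ _ => F_hasDeriv a θ) (intSin_int a 0 π)]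
  rw [Qf_pi, Qf_zero, exp_key a]
  simp [Real.exp_neg]
  ring

lemma intSin2 (a : ℝ) : ∫ θ in π..(2*π), Real.sin θ / Qf a θ ^ 3 = -(2 * Real.exp (-a)) := by
  rw [integral_eq_sub_of_hasDerivAt (fun θ _ => F_hasDeriv a θ) (intSin_int a π (2*π))]
  rw [Qf_pi, Qf_two_pi, exp_key a]
  simp [Real.exp_neg]
  ring

lemma intCos1 (a : ℝ) : ∫ θ in (0:ℝ)..(π/2), Real.cos θ / Qf a θ ^ 3 = Real.exp a := by
  rw [integral_eq_sub_of_hasDerivAt (fun θ _ => G_hasDeriv a θ) (intCos_int a 0 (π/2))]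
  rw [Qf_pi_div_two, Qf_zero, exp_key' a]
  simp [Real.exp_neg]

lemma intCos2 (a : ℝ) : ∫ θ in (π/2)..(3*π/2), Real.cos θ / Qf a θ ^ 3 = -(2 * Real.exp a) := by
  rw [integral_eq_sub_of_hasDerivAt (fun θ _ => G_hasDeriv a θ) (intCos_int a (π/2) (3*π/2))]
  have hs : Real.sin (3 * π / 2) = -1 := by
    rw [show (3 * π / 2) = π + π / 2 by ring, Real.sin_add]; simp
  rw [Qf_pi_div_two, Qf_3pi_div_two, hs, exp_key' a]
  simp [Real.exp_neg]
  ring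

lemma intCos3 (a : ℝ) : ∫ θ in (3*π/2)..(2*π), Real.cos θ / Qf a θ ^ 3 = Real.exp a := by
  rw [integral_eq_sub_of_hasDerivAt (fun θ _ => G_hasDeriv a θ) (intCos_int a (3*π/2) (2*π))]
  have hs : Real.sin (3 * π / 2) = -1 := by
    rw [show (3 * π / 2) = π + π / 2 by ring, Real.sin_add]; simp
  rw [Qf_3pi_div_two, Qf_two_pi, hs, Real.sin_two_pi, exp_key' a]
  simp [Real.exp_neg]



lemma intAbsSin_int (a u v : ℝ) :
    IntervalIntegrable (fun θ => |Real.sin θ| / Qf a θ ^ 3) MeasureTheory.volume u v :=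
  (Real.continuous_sin.abs.div ((Qf_cont_theta a).pow 3)
    (fun θ => (pow_pos (Qf_pos a θ) 3).ne')).intervalIntegrable u v

lemma intAbsCos_int (a u v : ℝ) :
    IntervalIntegrable (fun θ => |Real.cos θ| / Qf a θ ^ 3) MeasureTheory.volume u v :=
  (Real.continuous_cos.abs.div ((Qf_cont_theta a).pow 3)
    (fun θ => (pow_pos (Qf_pos a θ) 3).ne')).intervalIntegrable u v

lemma intAbsSin (a : ℝ) :
    ∫ θ in (0:ℝ)..(2*π), |Real.sin θ| / Qf a θ ^ 3 = 4 * Real.exp (-a) := by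
  have hpi : (0:ℝ) ≤ π := Real.pi_pos.le
  rw [← integral_add_adjacent_intervals (b := π) (intAbsSin_int a 0 π) (intAbsSin_int a π (2*π))]
  have h1 : ∫ θ in (0:ℝ)..π, |Real.sin θ| / Qf a θ ^ 3
      = ∫ θ in (0:ℝ)..π, Real.sin θ / Qf a θ ^ 3 := by
    apply integral_congr
    intro x hx
    rw [Set.uIcc_of_le hpi] at hx
    simp only [abs_of_nonneg (Real.sin_nonneg_of_nonneg_of_le_pi hx.1 hx.2)]
  have h2 : ∫ θ in π..(2*π), |Real.sin θ| / Qf a θ ^ 3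
      = ∫ θ in π..(2*π), -(Real.sin θ / Qf a θ ^ 3) := by
    apply integral_congr
    intro x hx
    rw [Set.uIcc_of_le (by linarith)] at hx
    have hs : Real.sin x ≤ 0 := by
      have h := Real.sin_nonneg_of_nonneg_of_le_pi (x := x - π) (by linarith [hx.1]) (by linarith [hx.2])
      rw [Real.sin_sub_pi] at h
      linarith
    simp only [abs_of_nonpos hs]
    ring
  rw [h1, h2, integral_neg, intSin1, intSin2]
  ring

lemma intAbsCos (a : ℝ) :
    ∫ θ in (0:ℝ)..(2*π), |Real.cos θ| / Qf a θ ^ 3 = 4 * Real.exp a := by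
  have hpi : (0:ℝ) < π := Real.pi_pos
  rw [← integral_add_adjacent_intervals (b := 3*π/2) (intAbsCos_int a 0 (3*π/2)) (intAbsCos_int a (3*π/2) (2*π)),
      ← integral_add_adjacent_intervals (b := π/2) (intAbsCos_int a 0 (π/2)) (intAbsCos_int a (π/2) (3*π/2))]
  have h1 : ∫ θ in (0:ℝ)..(π/2), |Real.cos θ| / Qf a θ ^ 3
      = ∫ θ in (0:ℝ)..(π/2), Real.cos θ / Qf a θ ^ 3 := by
    apply integral_congr
    intro x hx
    rw [Set.uIcc_of_le (by linarith)] at hx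
    simp only [abs_of_nonneg (Real.cos_nonneg_of_mem_Icc ⟨by linarith [hx.1], hx.2⟩)]
  have h2 : ∫ θ in (π/2)..(3*π/2), |Real.cos θ| / Qf a θ ^ 3
      = ∫ θ in (π/2)..(3*π/2), -(Real.cos θ / Qf a θ ^ 3) := by
    apply integral_congr
    intro x hx
    rw [Set.uIcc_of_le (by linarith)] at hx
    have hc : Real.cos x ≤ 0 := by
      have h := Real.cos_nonneg_of_mem_Icc (x := x - π)
        ⟨by linarith [hx.1], by linarith [hx.2]⟩
      rw [Real.cos_sub_pi] at h
      linarith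
    simp only [abs_of_nonpos hc]
    ring
  have h3 : ∫ θ in (3*π/2)..(2*π), |Real.cos θ| / Qf a θ ^ 3
      = ∫ θ in (3*π/2)..(2*π), Real.cos θ / Qf a θ ^ 3 := by
    apply integral_congr
    intro x hx
    rw [Set.uIcc_of_le (by linarith)] at hx
    have hc : 0 ≤ Real.cos x := by
      have h := Real.cos_nonneg_of_mem_Icc (x := x - 2*π)
        ⟨by linarith [hx.1], by linarith [hx.2]⟩
      rwa [Real.cos_sub_two_pi] at h
    simp only [abs_of_nonneg hc]
  rw [h1, h2, h3, integral_neg, intCos1, intCos2, intCos3]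
  ring



lemma Qf_def (a θ : ℝ) : Qf a θ =
    Real.sqrt ((Real.cos θ) ^ 2 * Real.exp (-(2 * a)) + (Real.sin θ) ^ 2 * Real.exp (2 * a)) := rfl

/-- Lower bound on the (rescaled) circumference of a constant-η light-cone slice in a
1+2-dimensional Bianchi I spacetime: `L(η,η₀) ≥ 4(η₀ − η)`. -/
theorem stmt_7 (b : ℝ → ℝ) (hb : Continuous b) (η η₀ : ℝ) (hη : η < η₀)
    (ρ : ℝ → ℝ → ℝ)
    (hρ : ∀ θ ζ, ρ θ ζ = Real.sqrt ((Real.cos θ) ^ 2 * Real.exp (-(2 * b ζ)) +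
      (Real.sin θ) ^ 2 * Real.exp (2 * b ζ)))
    (K : ℝ → ℝ)
    (hK : ∀ θ, K θ = ∫ ζ in η..η₀, 1 / (ρ θ ζ) ^ 3)
    (L : ℝ)
    (hL : L = ∫ θ in (0:ℝ)..(2 * π),
      Real.sqrt (Real.exp (2 * b η) * (-Real.sin θ * K θ) ^ 2 +
        Real.exp (-(2 * b η)) * (Real.cos θ * K θ) ^ 2)) :
    4 * (η₀ - η) ≤ L := by
  have hpi : (0:ℝ) < π := Real.pi_pos
  have hρQ : ∀ θ ζ, ρ θ ζ = Qf (b ζ) θ := fun θ ζ => by rw [hρ, Qf_def]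
  have hK' : K = fun θ => ∫ ζ in η..η₀, 1 / Qf (b ζ) θ ^ 3 := by
    funext θ; rw [hK]; simp only [hρQ]
  have hFc : Continuous fun p : ℝ × ℝ => 1 / Qf (b p.2) p.1 ^ 3 := by
    apply Continuous.div continuous_const
    · exact (Qf_cont.comp ((hb.comp continuous_snd).prodMk continuous_fst)).pow 3
    · exact fun p => (pow_pos (Qf_pos _ _) 3).ne'
  have hKcont : Continuous K := by
    rw [hK']
    exact intervalIntegral.continuous_parametric_intervalIntegral_of_continuous'
      (f := fun (θ : ℝ) (ζ : ℝ) => 1 / Qf (b ζ) θ ^ 3) hFc η η₀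
  have hK0 : ∀ θ, 0 ≤ K θ := by
    intro θ; rw [hK']
    apply intervalIntegral.integral_nonneg hη.le
    exact fun ζ _ => div_nonneg zero_le_one (pow_pos (Qf_pos (b ζ) θ) 3).le
  -- rewrite L
  have hL' : L = ∫ θ in (0:ℝ)..(2*π), Qf (b η) θ * K θ := by
    rw [hL]
    apply integral_congr
    intro θ _
    simp only
    rw [show Real.exp (2 * b η) * (-Real.sin θ * K θ) ^ 2 +
        Real.exp (-(2 * b η)) * (Real.cos θ * K θ) ^ 2
      = ((Real.cos θ) ^ 2 * Real.exp (-(2 * b η)) + (Real.sin θ) ^ 2 * Real.exp (2 * b η))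
        * K θ ^ 2 by ring]
    rw [Real.sqrt_mul (Qg_pos (b η) θ).le, Real.sqrt_sq (hK0 θ), Qf_def]
  set W : ℝ → ℝ := fun θ =>
    (Real.exp (b η) * |Real.sin θ| + Real.exp (-(b η)) * |Real.cos θ|) / 2 with hW
  have hWcont : Continuous W := by fun_prop
  have hWle : ∀ θ, W θ ≤ Qf (b η) θ := by
    intro θ
    have h1 : Real.exp (b η) * |Real.sin θ| ≤ Qf (b η) θ := by
      rw [show Real.exp (b η) * |Real.sin θ|
          = Real.sqrt ((Real.sin θ) ^ 2 * Real.exp (2 * b η)) by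
        rw [Real.sqrt_mul (sq_nonneg _), Real.sqrt_sq_eq_abs, sqrt_exp']; ring]
      rw [Qf_def]
      apply Real.sqrt_le_sqrt
      nlinarith [mul_nonneg (sq_nonneg (Real.cos θ)) (Real.exp_pos (-(2 * b η))).le]
    have h2 : Real.exp (-(b η)) * |Real.cos θ| ≤ Qf (b η) θ := by
      rw [show Real.exp (-(b η)) * |Real.cos θ|
          = Real.sqrt ((Real.cos θ) ^ 2 * Real.exp (-(2 * b η))) by
        rw [Real.sqrt_mul (sq_nonneg _), Real.sqrt_sq_eq_abs,
          show -(2 * b η) = 2 * (-(b η)) by ring, sqrt_exp']; ring]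
      rw [Qf_def]
      apply Real.sqrt_le_sqrt
      nlinarith [mul_nonneg (sq_nonneg (Real.sin θ)) (Real.exp_pos (2 * b η)).le]
    rw [hW]; dsimp only; linarith
  -- step 1 : ∫ W*K ≤ L
  have step1 : ∫ θ in (0:ℝ)..(2*π), W θ * K θ ≤ L := by
    rw [hL']
    apply integral_mono_on (by linarith)
      ((hWcont.mul hKcont).intervalIntegrable _ _)
      (((Qf_cont_theta (b η)).mul hKcont).intervalIntegrable _ _)
    exact fun θ _ => mul_le_mul_of_nonneg_right (hWle θ) (hK0 θ)
  -- Fubini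
  have hGc : Continuous fun p : ℝ × ℝ => W p.1 * (1 / Qf (b p.2) p.1 ^ 3) :=
    (hWcont.comp continuous_fst).mul hFc
  have swap : ∫ θ in (0:ℝ)..(2*π), ∫ ζ in η..η₀, W θ * (1 / Qf (b ζ) θ ^ 3)
      = ∫ ζ in η..η₀, ∫ θ in (0:ℝ)..(2*π), W θ * (1 / Qf (b ζ) θ ^ 3) := by
    rw [intervalIntegral.integral_of_le (by linarith : (0:ℝ) ≤ 2*π),
        intervalIntegral.integral_of_le hη.le]
    simp only [intervalIntegral.integral_of_le hη.le,
      intervalIntegral.integral_of_le (by linarith : (0:ℝ) ≤ 2*π)]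
    apply MeasureTheory.integral_integral_swap
    rw [Function.uncurry_def]
    rw [MeasureTheory.Measure.prod_restrict, ← MeasureTheory.Measure.volume_eq_prod]
    apply MeasureTheory.IntegrableOn.mono_set
      (hGc.continuousOn.integrableOn_compact (isCompact_Icc.prod isCompact_Icc))
    exact Set.prod_mono Set.Ioc_subset_Icc_self Set.Ioc_subset_Icc_self
  -- inner integral computation
  have inner : ∀ ζ, (∫ θ in (0:ℝ)..(2*π), W θ * (1 / Qf (b ζ) θ ^ 3))
      = 2 * (Real.exp (b η) * Real.exp (-(b ζ))) + 2 * (Real.exp (-(b η)) * Real.exp (b ζ)) := by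
    intro ζ
    have hrw : (fun θ => W θ * (1 / Qf (b ζ) θ ^ 3))
        = fun θ => (Real.exp (b η) / 2) * (|Real.sin θ| / Qf (b ζ) θ ^ 3)
          + (Real.exp (-(b η)) / 2) * (|Real.cos θ| / Qf (b ζ) θ ^ 3) := by
      funext θ; rw [hW]; dsimp only; ring
    rw [hrw, intervalIntegral.integral_add
        ((intAbsSin_int (b ζ) 0 (2*π)).const_mul _)
        ((intAbsCos_int (b ζ) 0 (2*π)).const_mul _),
      intervalIntegral.integral_const_mul, intervalIntegral.integral_const_mul,
      intAbsSin, intAbsCos]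
    ring
  -- final lower bound
  have step2 : 4 * (η₀ - η)
      ≤ ∫ ζ in η..η₀, (2 * (Real.exp (b η) * Real.exp (-(b ζ)))
          + 2 * (Real.exp (-(b η)) * Real.exp (b ζ))) := by
    have h4 : ∀ ζ, (4:ℝ) ≤ 2 * (Real.exp (b η) * Real.exp (-(b ζ)))
        + 2 * (Real.exp (-(b η)) * Real.exp (b ζ)) := by
      intro ζ
      have huv : (Real.exp (b η) * Real.exp (-(b ζ)))
          * (Real.exp (-(b η)) * Real.exp (b ζ)) = 1 := by
        rw [← Real.exp_add, ← Real.exp_add, ← Real.exp_add,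
          show b η + -b ζ + (-b η + b ζ) = 0 by ring, Real.exp_zero]
      have hu : 0 < Real.exp (b η) * Real.exp (-(b ζ)) := by positivity
      have hv : 0 < Real.exp (-(b η)) * Real.exp (b ζ) := by positivity
      nlinarith [mul_nonneg (sq_nonneg (Real.exp (b η) * Real.exp (-(b ζ)) - 1)) hv.le]
    calc 4 * (η₀ - η) = ∫ _ in η..η₀, (4:ℝ) := by
          rw [intervalIntegral.integral_const]; simp [smul_eq_mul]; ring
      _ ≤ _ := by
          apply integral_mono_on hη.le intervalIntegrable_const
            ((by fun_prop : Continuous fun ζ => 2 * (Real.exp (b η) * Real.exp (-(b ζ)))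
              + 2 * (Real.exp (-(b η)) * Real.exp (b ζ))).intervalIntegrable _ _)
          exact fun ζ _ => h4 ζ
  -- chain
  have hWK : (∫ θ in (0:ℝ)..(2*π), W θ * K θ)
      = ∫ θ in (0:ℝ)..(2*π), ∫ ζ in η..η₀, W θ * (1 / Qf (b ζ) θ ^ 3) := by
    apply integral_congr
    intro θ _
    simp only [hK']
    rw [← intervalIntegral.integral_const_mul]
  calc 4 * (η₀ - η)
      ≤ ∫ ζ in η..η₀, (2 * (Real.exp (b η) * Real.exp (-(b ζ)))
          + 2 * (Real.exp (-(b η)) * Real.exp (b ζ))) := step2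
    _ = ∫ ζ in η..η₀, ∫ θ in (0:ℝ)..(2*π), W θ * (1 / Qf (b ζ) θ ^ 3) := by
        exact integral_congr fun ζ _ => (inner ζ).symm
    _ = ∫ θ in (0:ℝ)..(2*π), ∫ ζ in η..η₀, W θ * (1 / Qf (b ζ) θ ^ 3) := swap.symm
    _ = ∫ θ in (0:ℝ)..(2*π), W θ * K θ := hWK.symm
    _ ≤ L := step1
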